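/- Let h, j, k, n be positive integers with 1 ≤ j ≤ k ≤ n, h = j+k+n+1, and n ≤ ⌊h/2⌋. Then Mo(P_L(j,k,n)) := 24·(2kj + 3nj + 4kn + k + 2n) equals 6·[2(j+1)(n−k) + 2(k+1)(n−j) + 2(n+1)(k−j) + 4∑_{i=1}^{j}(h+1−2i) + 4∑_{i=1}^{k}(h+1−2i) + 4∑_{i=1}^{n}(h+1−2i) + 2∑_{i=1}^{j}(h−2i) + 2∑_{i=1}^{k}(h−2i) + 2∑_{i=1}^{n}(h−2i)]. -/
import Mathlib

open Finset

lemma sum_lin (c : ℤ) (m : ℕ) :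
    ∑ i ∈ Finset.Icc 1 m, (c - 2 * (i : ℤ)) = m * c - m * (m + 1) := by
  induction m with
  | zero => simp
  | succ m ih =>
    rw [Finset.sum_Icc_succ_top (by omega), ih]
    push_cast; ring

/-- Cut-method identity for `Mo(P_L(j,k,n))` when `n ≤ ⌊h/2⌋`, `h = j+k+n+1`. -/
theorem mostar_PL_small_n (j k n h : ℕ) (hj : 1 ≤ j) (hjk : j ≤ k) (hkn : k ≤ n)
    (hh : h = j + k + n + 1) (hn : n ≤ h / 2) :
    (24 : ℤ) * (2 * k * j + 3 * n * j + 4 * k * n + k + 2 * n) =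
      6 * (2 * ((j : ℤ) + 1) * ((n : ℤ) - (k : ℤ)) +
           2 * ((k : ℤ) + 1) * ((n : ℤ) - (j : ℤ)) +
           2 * ((n : ℤ) + 1) * ((k : ℤ) - (j : ℤ)) +
           4 * ∑ i ∈ Finset.Icc 1 j, ((h : ℤ) + 1 - 2 * (i : ℤ)) +
           4 * ∑ i ∈ Finset.Icc 1 k, ((h : ℤ) + 1 - 2 * (i : ℤ)) +
           4 * ∑ i ∈ Finset.Icc 1 n, ((h : ℤ) + 1 - 2 * (i : ℤ)) +
           2 * ∑ i ∈ Finset.Icc 1 j, ((h : ℤ) - 2 * (i : ℤ)) +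
           2 * ∑ i ∈ Finset.Icc 1 k, ((h : ℤ) - 2 * (i : ℤ)) +
           2 * ∑ i ∈ Finset.Icc 1 n, ((h : ℤ) - 2 * (i : ℤ))) := by
  simp only [sum_lin ((h : ℤ) + 1), sum_lin (h : ℤ)]
  subst hh
  push_cast
  ring
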